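/- For all positive integers m and n, the Schur functions satisfy s_{(m^n)}·s_{(m^n)} = s_{(m^{n-1})}·s_{(m^{n+1})} + s_{((m-1)^n)}·s_{((m+1)^n)}, where (m^n) denotes the rectangular partition with n parts equal to m. -/

import Mathlib

open MvPolynomial

/-- The `k`-th complete homogeneous symmetric function, as a free generator of the
ring of symmetric functions `Λ = ℤ[h₁, h₂, …]` (with `h₀ = 1` and `h_k = 0` for `k < 0`). -/
noncomputable def hh (k : ℤ) : MvPolynomial ℕ ℤ :=
  if k < 0 then 0 else if k = 0 then 1 else MvPolynomial.X k.toNat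

/-- The Schur function of the sequence `(f 0, f 1, …, f (n-1))`, defined by the
Jacobi–Trudi determinant `det (h_{λ_i - i + j})_{1 ≤ i,j ≤ n}`. -/
noncomputable def schurN (n : ℕ) (f : ℕ → ℕ) : MvPolynomial ℕ ℤ :=
  Matrix.det (Matrix.of fun i j : Fin n => hh ((f i : ℤ) - (i : ℕ) + (j : ℕ)))

/-- Schur function of a partition given as a list of its parts. -/
noncomputable def schurL (l : List ℕ) : MvPolynomial ℕ ℤ :=
  schurN l.length (fun i => l.getD i 0)

section DesnanotJacobi

open Matrix

variable {R : Type*} [CommRing R]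



lemma mul_updateColumn {n : ℕ} (A B : Matrix (Fin n) (Fin n) R) (j : Fin n) (v : Fin n → R) :
    A * (B.updateCol j v) = (A * B).updateCol j (A *ᵥ v) := by
  ext i k
  by_cases h : k = j
  · subst h
    simp [Matrix.mul_apply, Matrix.mulVec, dotProduct]
  · simp [Matrix.mul_apply, Matrix.updateCol_ne h]

lemma updateColumn_comm {n : ℕ} (A : Matrix (Fin n) (Fin n) R) {j k : Fin n} (h : j ≠ k)
    (u v : Fin n → R) :
    (A.updateCol j u).updateCol k v = (A.updateCol k v).updateCol j u := by
  ext i l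
  rcases eq_or_ne l k with rfl | hk
  · rw [Matrix.updateCol_self, Matrix.updateCol_ne h.symm, Matrix.updateCol_self]
  rcases eq_or_ne l j with rfl | hj
  · rw [Matrix.updateCol_ne hk, Matrix.updateCol_self, Matrix.updateCol_self]
  · rw [Matrix.updateCol_ne hk, Matrix.updateCol_ne hj, Matrix.updateCol_ne hj,
      Matrix.updateCol_ne hk]



lemma detL1 {n : ℕ} (M : Matrix (Fin (n+1)) (Fin (n+1)) R) :
    det (M.updateCol 0 (Pi.single 0 1)) = det (M.submatrix Fin.succ Fin.succ) := by
  rw [det_succ_column_zero, Finset.sum_eq_single 0]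
  · have h1 : (M.updateCol 0 (Pi.single 0 (1:R))).submatrix Fin.succ Fin.succ
        = M.submatrix Fin.succ Fin.succ := by
      ext i j
      simp [Matrix.updateCol_ne (Fin.succ_ne_zero j)]
    simp [Fin.succAbove_zero, h1]
  · intro b _ hb
    simp [Matrix.updateCol_self, Pi.single_eq_of_ne hb]
  · simp

lemma detL2 {n : ℕ} (M : Matrix (Fin (n+1)) (Fin (n+1)) R) :
    det (M.updateCol (Fin.last n) (Pi.single (Fin.last n) 1))
      = det (M.submatrix Fin.castSucc Fin.castSucc) := by
  rw [det_succ_column _ (Fin.last n), Finset.sum_eq_single (Fin.last n)]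
  · have h1 : (M.updateCol (Fin.last n) (Pi.single (Fin.last n) (1:R))).submatrix
        (Fin.last n).succAbove (Fin.last n).succAbove
        = M.submatrix Fin.castSucc Fin.castSucc := by
      ext i j
      simp [Fin.succAbove_last, Matrix.updateCol_ne (Fin.castSucc_lt_last j).ne]
    rw [h1]
    have : ((Fin.last n : Fin (n+1)) + (Fin.last n) : ℕ) = n + n := by simp
    simp [this, Even.neg_one_pow (Even.add_self n)]
  · intro b _ hb
    simp [Matrix.updateCol_self, Pi.single_eq_of_ne hb]
  · simp

lemma detL3 {n : ℕ} (M : Matrix (Fin (n+1)) (Fin (n+1)) R) :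
    det (M.updateCol 0 (Pi.single (Fin.last n) 1))
      = (-1)^n * det (M.submatrix Fin.castSucc Fin.succ) := by
  rw [det_succ_column_zero, Finset.sum_eq_single (Fin.last n)]
  · have h1 : (M.updateCol 0 (Pi.single (Fin.last n) (1:R))).submatrix
        (Fin.last n).succAbove Fin.succ = M.submatrix Fin.castSucc Fin.succ := by
      ext i j
      simp [Fin.succAbove_last, Matrix.updateCol_ne (Fin.succ_ne_zero j)]
    rw [h1]
    simp
  · intro b _ hb
    simp [Matrix.updateCol_self, Pi.single_eq_of_ne hb]
  · simp

lemma detL4 {n : ℕ} (M : Matrix (Fin (n+1)) (Fin (n+1)) R) :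
    det (M.updateCol (Fin.last n) (Pi.single 0 1))
      = (-1)^n * det (M.submatrix Fin.succ Fin.castSucc) := by
  rw [det_succ_column _ (Fin.last n), Finset.sum_eq_single 0]
  · have h1 : (M.updateCol (Fin.last n) (Pi.single 0 (1:R))).submatrix
        (0 : Fin (n+1)).succAbove (Fin.last n).succAbove
        = M.submatrix Fin.succ Fin.castSucc := by
      ext i j
      simp [Fin.succAbove_zero, Fin.succAbove_last,
        Matrix.updateCol_ne (Fin.castSucc_lt_last j).ne]
    rw [h1]
    simp
  · intro b _ hb
    simp [Matrix.updateCol_self, Pi.single_eq_of_ne hb]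
  · simp



lemma detE {n : ℕ} (k i : Fin (n+2)) :
    det (((1 : Matrix (Fin (n+2)) (Fin (n+2)) R).updateCol 0
        (Pi.single k 1)).updateCol (Fin.last (n+1)) (Pi.single i 1))
      = (if k = 0 then (1:R) else 0) * (if i = Fin.last (n+1) then 1 else 0)
        - (if k = Fin.last (n+1) then 1 else 0) * (if i = 0 then 1 else 0) := by
  have hn : (0 : Fin (n+2)) ≠ Fin.last (n+1) := by
    simp [Fin.ext_iff]
  set L := Fin.last (n+1)
  by_cases hk0 : k = 0
  · subst hk0
    by_cases hiL : i = L
    · subst hiL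
      have h1 : ((1 : Matrix (Fin (n+2)) (Fin (n+2)) R).updateCol 0
          (Pi.single 0 1)).updateCol L (Pi.single L 1) = 1 := by
        have e0 : (Pi.single 0 (1:R) : Fin (n+2) → R) = fun a => (1 : Matrix (Fin (n+2)) (Fin (n+2)) R) a 0 := by
          funext a; simp [Matrix.one_apply, Pi.single_apply]
        have eL : (Pi.single L (1:R) : Fin (n+2) → R) = fun a => (1 : Matrix (Fin (n+2)) (Fin (n+2)) R) a L := by
          funext a; simp [Matrix.one_apply, Pi.single_apply]
        rw [e0, Matrix.updateCol_eq_self, eL, Matrix.updateCol_eq_self]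
      rw [h1]
      simp [hn, hn.symm]
    · by_cases hi0 : i = 0
      · subst hi0
        rw [Matrix.det_zero_of_column_eq hn]
        · simp [hn.symm]
        · intro a
          rw [Matrix.updateCol_ne hn, Matrix.updateCol_self, Matrix.updateCol_self]
      · rw [Matrix.det_zero_of_column_eq (show i ≠ L from hiL)]
        · simp [hiL, hi0]
        · intro a
          rw [Matrix.updateCol_ne hiL, Matrix.updateCol_ne hi0, Matrix.updateCol_self]
          simp [Matrix.one_apply, Pi.single_apply]
  · by_cases hkL : k = L
    · subst hkL
      by_cases hi0 : i = 0
      · subst hi0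
        have h1 : ((1 : Matrix (Fin (n+2)) (Fin (n+2)) R).updateCol 0
            (Pi.single L 1)).updateCol L (Pi.single 0 1)
            = (1 : Matrix (Fin (n+2)) (Fin (n+2)) R).submatrix id (Equiv.swap 0 L) := by
          ext a b
          rcases eq_or_ne b L with rfl | hbL
          · rw [Matrix.updateCol_self]
            simp [Matrix.one_apply, Pi.single_apply, Equiv.swap_apply_right]
          rcases eq_or_ne b 0 with rfl | hb0
          · rw [Matrix.updateCol_ne hn, Matrix.updateCol_self]
            simp [Matrix.one_apply, Pi.single_apply, Equiv.swap_apply_left]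
          · rw [Matrix.updateCol_ne hbL, Matrix.updateCol_ne hb0]
            simp [Matrix.one_apply, Equiv.swap_apply_of_ne_of_ne hb0 hbL]
        rw [h1, Matrix.det_permute', Equiv.Perm.sign_swap hn]
        simp [hn]
      · by_cases hiL : i = L
        · subst hiL
          rw [Matrix.det_zero_of_column_eq hn]
          · simp [hn]
          · intro a
            rw [Matrix.updateCol_ne hn, Matrix.updateCol_self, Matrix.updateCol_self]
        · rw [Matrix.det_zero_of_column_eq (show i ≠ L from hiL)]
          · simp [hiL, hi0]
          · intro a
            rw [Matrix.updateCol_ne hiL, Matrix.updateCol_ne hi0, Matrix.updateCol_self]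
            simp [Matrix.one_apply, Pi.single_apply]
    · rw [Matrix.det_zero_of_column_eq (show (0 : Fin (n+2)) ≠ k from fun h => hk0 h.symm)]
      · simp [hk0, hkL]
      · intro a
        rw [Matrix.updateCol_ne hn, Matrix.updateCol_self,
          Matrix.updateCol_ne hkL, Matrix.updateCol_ne hk0]
        simp [Matrix.one_apply, Pi.single_apply]



lemma det_updateColumn_expand {N : ℕ} (M : Matrix (Fin N) (Fin N) R) (j : Fin N) (v : Fin N → R) :
    det (M.updateCol j v) = ∑ i, v i * det (M.updateCol j (Pi.single i 1)) := by
  have hv : v = ∑ i, v i • (Pi.single i (1:R) : Fin N → R) := by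
    conv_lhs => rw [← Finset.univ_sum_single v]
    refine Finset.sum_congr rfl fun i _ => ?_
    rw [← Pi.single_smul, smul_eq_mul, mul_one]
  conv_lhs => rw [← Matrix.cramer_apply, hv]
  rw [map_sum, Finset.sum_apply]
  refine Finset.sum_congr rfl fun i _ => ?_
  rw [LinearMap.map_smul, Pi.smul_apply, smul_eq_mul, Matrix.cramer_apply]

lemma detC {n : ℕ} (c0 cl : Fin (n+2) → R) :
    det (((1 : Matrix (Fin (n+2)) (Fin (n+2)) R).updateCol 0 c0).updateCol
        (Fin.last (n+1)) cl)
      = c0 0 * cl (Fin.last (n+1)) - c0 (Fin.last (n+1)) * cl 0 := by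
  have hn : (0 : Fin (n+2)) ≠ Fin.last (n+1) := by simp [Fin.ext_iff]
  rw [det_updateColumn_expand]
  have step : ∀ i : Fin (n+2),
      det (((1 : Matrix (Fin (n+2)) (Fin (n+2)) R).updateCol 0 c0).updateCol
        (Fin.last (n+1)) (Pi.single i 1))
      = c0 0 * (if i = Fin.last (n+1) then 1 else 0)
        - c0 (Fin.last (n+1)) * (if i = 0 then 1 else 0) := by
    intro i
    rw [updateColumn_comm _ hn, det_updateColumn_expand]
    have inner : ∀ k : Fin (n+2),
        det (((1 : Matrix (Fin (n+2)) (Fin (n+2)) R).updateCol (Fin.last (n+1))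
          (Pi.single i 1)).updateCol 0 (Pi.single k 1))
        = (if k = 0 then (1:R) else 0) * (if i = Fin.last (n+1) then 1 else 0)
          - (if k = Fin.last (n+1) then 1 else 0) * (if i = 0 then 1 else 0) := by
      intro k
      rw [← updateColumn_comm _ hn, detE]
    simp only [inner, mul_sub, mul_ite, mul_one, mul_zero, Finset.sum_sub_distrib,
      ite_mul, zero_mul, one_mul, Finset.sum_ite_eq', Finset.mem_univ, if_true]
    split_ifs <;> simp
  simp only [step, mul_sub, mul_ite, mul_one, mul_zero, Finset.sum_sub_distrib,
    ite_mul, zero_mul, one_mul, Finset.sum_ite_eq', Finset.mem_univ, if_true]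
  ring

lemma det_corner {n : ℕ} (A : Matrix (Fin (n+2)) (Fin (n+2)) R) :
    det ((A.updateCol 0 (Pi.single 0 1)).updateCol (Fin.last (n+1))
        (Pi.single (Fin.last (n+1)) 1))
      = det (A.submatrix (Fin.succ ∘ Fin.castSucc) (Fin.succ ∘ Fin.castSucc)) := by
  have hn : (0 : Fin (n+2)) ≠ Fin.last (n+1) := by simp [Fin.ext_iff]
  rw [updateColumn_comm _ hn, detL1]
  have subm : (A.updateCol (Fin.last (n+1)) (Pi.single (Fin.last (n+1)) (1:R))).submatrix
      Fin.succ Fin.succ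
      = (A.submatrix Fin.succ Fin.succ).updateCol (Fin.last n)
          (Pi.single (Fin.last n) 1) := by
    ext i j
    rcases eq_or_ne j (Fin.last n) with rfl | hj
    · rw [Matrix.submatrix_apply, Fin.succ_last, Matrix.updateCol_self,
        Matrix.updateCol_self]
      simp [Pi.single_apply, Fin.succ_inj]
    · have hj' : Fin.succ j ≠ Fin.last (n+1) := by
        rw [← Fin.succ_last]; exact fun h => hj (Fin.succ_injective _ h)
      rw [Matrix.submatrix_apply, Matrix.updateCol_ne hj', Matrix.updateCol_ne hj,
        Matrix.submatrix_apply]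
  rw [subm, detL2, Matrix.submatrix_submatrix]

lemma key {n : ℕ} (A : Matrix (Fin (n+2)) (Fin (n+2)) R) :
    det A * (det (A.submatrix Fin.succ Fin.succ) * det (A.submatrix Fin.castSucc Fin.castSucc)
      - det (A.submatrix Fin.succ Fin.castSucc) * det (A.submatrix Fin.castSucc Fin.succ))
    = det A * (det A *
        det (A.submatrix (Fin.succ ∘ Fin.castSucc) (Fin.succ ∘ Fin.castSucc))) := by
  have hn : (0 : Fin (n+2)) ≠ Fin.last (n+1) := by simp [Fin.ext_iff]
  set L := Fin.last (n+1) with hL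
  set c0 : Fin (n+2) → R := fun i => adjugate A i 0 with hc0
  set cl : Fin (n+2) → R := fun i => adjugate A i L with hcl
  set C : Matrix (Fin (n+2)) (Fin (n+2)) R :=
    ((1 : Matrix (Fin (n+2)) (Fin (n+2)) R).updateCol 0 c0).updateCol L cl with hC
  -- row-update determinants equal column-update determinants of the transpose
  have hrowcol : ∀ (j : Fin (n+2)) (v : Fin (n+2) → R),
      det (A.updateRow j v) = det (Aᵀ.updateCol j v) := by
    intro j v
    rw [Matrix.updateCol_transpose, Matrix.det_transpose]
  -- adjugate corner entries
  have hadj00 : adjugate A 0 0 = det (A.submatrix Fin.succ Fin.succ) := by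
    rw [Matrix.adjugate_apply, hrowcol, detL1, ← Matrix.transpose_submatrix,
      Matrix.det_transpose]
  have hadjLL : adjugate A L L = det (A.submatrix Fin.castSucc Fin.castSucc) := by
    rw [Matrix.adjugate_apply, hrowcol, detL2, ← Matrix.transpose_submatrix,
      Matrix.det_transpose]
  have hadjL0 : adjugate A L 0 = (-1)^(n+1) * det (A.submatrix Fin.succ Fin.castSucc) := by
    rw [Matrix.adjugate_apply, hrowcol, detL3, ← Matrix.transpose_submatrix,
      Matrix.det_transpose]
  have hadj0L : adjugate A 0 L = (-1)^(n+1) * det (A.submatrix Fin.castSucc Fin.succ) := by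
    rw [Matrix.adjugate_apply, hrowcol, detL4, ← Matrix.transpose_submatrix,
      Matrix.det_transpose]
  -- first evaluation of det (A * C)
  have way1 : det (A * C) = det A *
      (det (A.submatrix Fin.succ Fin.succ) * det (A.submatrix Fin.castSucc Fin.castSucc)
        - det (A.submatrix Fin.succ Fin.castSucc) * det (A.submatrix Fin.castSucc Fin.succ)) := by
    rw [Matrix.det_mul, hC, detC, hc0, hcl]
    simp only [← hL, hadj00, hadjLL, hadjL0, hadj0L]
    ring_nf
    rw [show ((-1:R)^(n*2)) = 1 from Even.neg_one_pow ⟨n, by ring⟩]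
    ring
  -- second evaluation
  have hmv : ∀ j : Fin (n+2), (A *ᵥ fun i => adjugate A i j) = det A • (Pi.single j 1 : Fin (n+2) → R) := by
    intro j
    funext i
    have : (A *ᵥ fun i => adjugate A i j) i = (A * adjugate A) i j := by
      simp [Matrix.mulVec, Matrix.mul_apply, dotProduct]
    rw [this, Matrix.mul_adjugate]
    simp [Matrix.one_apply, Pi.single_apply, eq_comm]
  have way2 : det (A * C) = det A * (det A *
      det (A.submatrix (Fin.succ ∘ Fin.castSucc) (Fin.succ ∘ Fin.castSucc))) := by
    rw [hC, mul_updateColumn, mul_updateColumn, Matrix.mul_one, hc0, hcl, hmv, hmv,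
      Matrix.det_updateCol_smul, updateColumn_comm _ hn, Matrix.det_updateCol_smul,
      updateColumn_comm _ hn.symm, det_corner]
  rw [← way1, way2]

theorem desnanot {n : ℕ} (A : Matrix (Fin (n+2)) (Fin (n+2)) R) :
    det (A.submatrix Fin.succ Fin.succ) * det (A.submatrix Fin.castSucc Fin.castSucc)
      - det (A.submatrix Fin.succ Fin.castSucc) * det (A.submatrix Fin.castSucc Fin.succ)
    = det A * det (A.submatrix (Fin.succ ∘ Fin.castSucc) (Fin.succ ∘ Fin.castSucc)) := by
  classical
  set S := MvPolynomial (Fin (n+2) × Fin (n+2)) ℤ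
  set G : Matrix (Fin (n+2)) (Fin (n+2)) S :=
    Matrix.of fun i j => MvPolynomial.X (i, j) with hG
  have hdet : det G ≠ 0 := by
    intro h
    have h2 := congrArg (MvPolynomial.eval
      (fun p : Fin (n+2) × Fin (n+2) => if p.1 = p.2 then (1:ℤ) else 0)) h
    have hid : (RingHom.mapMatrix (MvPolynomial.eval
        (fun p : Fin (n+2) × Fin (n+2) => if p.1 = p.2 then (1:ℤ) else 0))) G
        = (1 : Matrix (Fin (n+2)) (Fin (n+2)) ℤ) := by
      ext i j
      simp [hG, Matrix.one_apply]
    rw [map_zero, RingHom.map_det, hid, Matrix.det_one] at h2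
    exact one_ne_zero h2
  have hgen : det (G.submatrix Fin.succ Fin.succ) * det (G.submatrix Fin.castSucc Fin.castSucc)
      - det (G.submatrix Fin.succ Fin.castSucc) * det (G.submatrix Fin.castSucc Fin.succ)
      = det G * det (G.submatrix (Fin.succ ∘ Fin.castSucc) (Fin.succ ∘ Fin.castSucc)) :=
    mul_left_cancel₀ hdet (key G)
  set ψ : S →+* R := MvPolynomial.eval₂Hom (Int.castRingHom R) (fun p => A p.1 p.2) with hψ
  have hψG : ψ.mapMatrix G = A := by
    ext i j
    exact MvPolynomial.eval₂Hom_X' _ _ (i, j)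
  have hsub : ∀ {k : ℕ} (f g : Fin k → Fin (n+2)),
      det (A.submatrix f g) = ψ (det (G.submatrix f g)) := by
    intro k f g
    rw [← hψG, RingHom.mapMatrix_apply, Matrix.submatrix_map, ← RingHom.mapMatrix_apply,
      ← RingHom.map_det]

  have hdetA : det A = ψ (det G) := by rw [← hψG, ← RingHom.map_det]
  rw [hsub, hsub, hsub, hsub, hsub, hdetA, ← _root_.map_mul ψ, ← _root_.map_mul ψ, ← map_sub,
    ← _root_.map_mul ψ, hgen]

end DesnanotJacobi

/-- For all positive integers `m`, `n`:
`s_{(m^n)} · s_{(m^n)} = s_{(m^{n-1})} · s_{(m^{n+1})} + s_{((m-1)^n)} · s_{((m+1)^n)}`. -/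
theorem rectangular_schur_bilinear (m n : ℕ) (hm : 0 < m) (hn : 0 < n) :
    schurN n (fun _ => m) * schurN n (fun _ => m) =
      schurN (n - 1) (fun _ => m) * schurN (n + 1) (fun _ => m) +
        schurN n (fun _ => m - 1) * schurN n (fun _ => m + 1) := by
  obtain ⟨N, rfl⟩ : ∃ N, n = N + 1 := ⟨n - 1, by omega⟩
  have hm1 : (1:ℕ) ≤ m := hm
  set A : Matrix (Fin (N+2)) (Fin (N+2)) (MvPolynomial ℕ ℤ) :=
    Matrix.of fun i j => hh ((m:ℤ) - ((i : Fin (N+2)) : ℕ) + ((j : Fin (N+2)) : ℕ)) with hA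
  have hss : A.submatrix Fin.succ Fin.succ
      = Matrix.of fun i j : Fin (N+1) => hh ((m:ℤ) - (i:ℕ) + (j:ℕ)) := by
    ext i j
    simp only [Matrix.submatrix_apply, Matrix.of_apply, hA]
    congr 1
    simp [Fin.val_succ]
    push_cast
    ring
  have hcc : A.submatrix Fin.castSucc Fin.castSucc
      = Matrix.of fun i j : Fin (N+1) => hh ((m:ℤ) - (i:ℕ) + (j:ℕ)) := by
    ext i j
    simp only [Matrix.submatrix_apply, Matrix.of_apply, hA, Fin.coe_castSucc]
  have hsc : A.submatrix Fin.succ Fin.castSucc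
      = Matrix.of fun i j : Fin (N+1) => hh ((↑(m-1):ℤ) - (i:ℕ) + (j:ℕ)) := by
    ext i j
    simp only [Matrix.submatrix_apply, Matrix.of_apply, hA]
    congr 1
    simp [Fin.val_succ, Fin.coe_castSucc]
    push_cast [Nat.cast_sub hm1]
    ring
  have hcs : A.submatrix Fin.castSucc Fin.succ
      = Matrix.of fun i j : Fin (N+1) => hh ((↑(m+1):ℤ) - (i:ℕ) + (j:ℕ)) := by
    ext i j
    simp only [Matrix.submatrix_apply, Matrix.of_apply, hA]
    congr 1
    simp [Fin.val_succ, Fin.coe_castSucc]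
    push_cast
    ring
  have hint : A.submatrix (Fin.succ ∘ Fin.castSucc) (Fin.succ ∘ Fin.castSucc)
      = Matrix.of fun i j : Fin N => hh ((m:ℤ) - (i:ℕ) + (j:ℕ)) := by
    ext i j
    simp only [Matrix.submatrix_apply, Matrix.of_apply, hA, Function.comp_apply]
    congr 1
    simp [Fin.val_succ, Fin.coe_castSucc]
    push_cast
    ring
  have hd := desnanot A
  rw [hss, hcc, hsc, hcs, hint] at hd
  rw [show schurN (N+1+1) (fun _ => m) = A.det from rfl,
    show schurN (N+1-1) (fun _ => m) = schurN N (fun _ => m) from rfl]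
  simp only [schurN, Nat.add_sub_cancel]
  linear_combination hd
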